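/- Let F be a locally finite object of C whose automorphisms are finitely separated. Then Aut(F) endowed with the topology τ_F generated by the base { N_F(e₁,e₂) } is a Hausdorff topological group: the topology is Hausdorff, inversion is continuous, and composition is continuous. -/

import Mathlib

open CategoryTheory

universe v u v' u'

def RamseyArrow (C : Type u) [Category.{v} C] (A B Z : C) (k t : ℕ) : Prop :=
  ∀ χ : (A ⟶ Z) → Fin k, ∃ w : B ⟶ Z,
    (Set.range fun f : A ⟶ B => χ (f ≫ w)).ncard ≤ t

noncomputable def ramseyDeg (C : Type u) [Category.{v} C] (A : C) : ℕ∞ :=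
  sInf {n : ℕ∞ | ∃ m : ℕ, n = (m : ℕ∞) ∧ 1 ≤ m ∧
    ∀ k : ℕ, 2 ≤ k → ∀ B : C, ∃ Z : C, RamseyArrow C A B Z k m}

def SatisfiesC (C : Type u) [Category.{v} C] (Cfin : Set C) : Prop :=
  (∀ {X Y : C} (f : X ⟶ Y), Mono f) ∧
  (∀ A B : C, A ∈ Cfin → B ∈ Cfin → Finite (A ⟶ B)) ∧
  (∀ F : C, ∃ A : C, A ∈ Cfin ∧ Nonempty (A ⟶ F)) ∧
  (∀ B : C, B ∈ Cfin → {A : C | A ∈ Cfin ∧ Nonempty (A ⟶ B)}.Finite)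

def UniversalFor (C : Type u) [Category.{v} C] (F : C) (S : Set C) : Prop :=
  ∀ A ∈ S, Nonempty (A ⟶ F)

def LocallyFiniteFor (C : Type u) [Category.{v} C] (F : C) (S : Set C) : Prop :=
  ∀ (A B : C), A ∈ S → B ∈ S → ∀ (e : A ⟶ F) (f : B ⟶ F),
    ∃ D₀ : C, D₀ ∈ S ∧ ∃ (r : D₀ ⟶ F) (p : A ⟶ D₀) (q : B ⟶ D₀),
      p ≫ r = e ∧ q ≫ r = f ∧
      ∀ (H : C) (r' : H ⟶ F) (p' : A ⟶ H) (q' : B ⟶ H),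
        p' ≫ r' = e → q' ≫ r' = f →
        ∃ s : D₀ ⟶ H, s ≫ r' = r ∧ p ≫ s = p' ∧ q ≫ s = q'

def NF (C : Type u) [Category.{v} C] (F : C) {A : C} (e₁ e₂ : A ⟶ F) : Set (Aut F) :=
  {g : Aut F | e₁ ≫ g.hom = e₂}

def tauF (C : Type u) [Category.{v} C] (Cfin : Set C) (F : C) : TopologicalSpace (Aut F) :=
  TopologicalSpace.generateFrom
    {S : Set (Aut F) | ∃ A ∈ Cfin, ∃ e₁ e₂ : A ⟶ F, S = NF C F e₁ e₂}

def FinitelySeparated (C : Type u) [Category.{v} C] (Cfin : Set C) (F : C) : Prop :=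
  ∀ f g : Aut F, f ≠ g → ∃ A ∈ Cfin, ∃ e : A ⟶ F, e ≫ f.hom ≠ e ≫ g.hom

theorem stmt8 {C : Type u} [Category.{v} C] (Cfin : Set C)
    (hsat : SatisfiesC C Cfin) (F : C) (hlf : LocallyFiniteFor C F Cfin)
    (hsep : FinitelySeparated C Cfin F) :
    @T2Space (Aut F) (tauF C Cfin F) ∧
    @IsTopologicalGroup (Aut F) (tauF C Cfin F) inferInstance := by
  letI : TopologicalSpace (Aut F) := tauF C Cfin F
  have hbasic : ∀ {A : C}, A ∈ Cfin → ∀ (e₁ e₂ : A ⟶ F), IsOpen (NF C F e₁ e₂) := by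
    intro A hA e₁ e₂
    exact TopologicalSpace.GenerateOpen.basic _ ⟨A, hA, e₁, e₂, rfl⟩
  constructor
  · constructor
    intro f g hfg
    obtain ⟨A, hA, e, he⟩ := hsep f g hfg
    refine ⟨NF C F e (e ≫ f.hom), NF C F e (e ≫ g.hom), hbasic hA _ _, hbasic hA _ _,
      rfl, rfl, ?_⟩
    rw [Set.disjoint_iff]
    rintro k ⟨hk1, hk2⟩
    exact he (hk1.symm.trans hk2)
  · refine { continuous_mul := ?_, continuous_inv := ?_ }
    · -- continuity of multiplication
      refine continuous_generateFrom_iff.mpr ?_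
      rintro S ⟨A, hA, e₁, e₂, rfl⟩
      rw [isOpen_prod_iff]
      rintro g h (hgh : e₁ ≫ (g * h).hom = e₂)
      have hgh' : e₁ ≫ h.hom ≫ g.hom = e₂ := by
        exact hgh
      refine ⟨NF C F (e₁ ≫ h.hom) e₂, NF C F e₁ (e₁ ≫ h.hom),
        hbasic hA _ _, hbasic hA _ _, by simpa [NF] using hgh', rfl, ?_⟩
      rintro ⟨g', h'⟩ ⟨hg' : (e₁ ≫ h.hom) ≫ g'.hom = e₂, hh' : e₁ ≫ h'.hom = e₁ ≫ h.hom⟩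
      show e₁ ≫ (g' * h').hom = e₂
      rw [Aut.Aut_mul_def]
      show e₁ ≫ h'.hom ≫ g'.hom = e₂
      rw [← Category.assoc, hh']
      exact hg'
    · -- continuity of inversion
      refine continuous_generateFrom_iff.mpr ?_
      rintro S ⟨A, hA, e₁, e₂, rfl⟩
      have : (fun g : Aut F => g⁻¹) ⁻¹' (NF C F e₁ e₂) = NF C F e₂ e₁ := by
        ext g
        simp only [Set.mem_preimage, NF, Set.mem_setOf_eq, Aut.Aut_inv_def, Iso.symm_hom]
        constructor
        · intro hg; rw [← hg]; exact (Category.assoc _ _ _).trans ((congrArg (e₁ ≫ ·) (Iso.inv_hom_id (g : F ≅ F))).trans (Category.comp_id e₁))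
        · intro hg; show e₁ ≫ (g : F ≅ F).inv = e₂; rw [← hg]; exact (Category.assoc _ _ _).trans ((congrArg (e₂ ≫ ·) (Iso.hom_inv_id (g : F ≅ F))).trans (Category.comp_id e₂))
      rw [this]
      exact hbasic hA _ _
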